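/- The function Q(x) = √2 / cosh(x) is an H¹ solution of the ODE Q'' - Q + Q³ = 0 on ℝ. -/

import Mathlib

open Real MeasureTheory

noncomputable def Q (x : ℝ) : ℝ := Real.sqrt 2 / Real.cosh x



lemma sq_le_sinh_sq (x : ℝ) : x ^ 2 ≤ Real.sinh x ^ 2 := by
  rcases le_total 0 x with hx | hx
  · exact pow_le_pow_left₀ hx (Real.self_le_sinh_iff.2 hx) 2
  · have h : (-x) ^ 2 ≤ Real.sinh (-x) ^ 2 :=
      pow_le_pow_left₀ (by linarith) (Real.self_le_sinh_iff.2 (by linarith)) 2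
    simpa [Real.sinh_neg] using h

lemma one_add_sq_le_cosh_sq (x : ℝ) : 1 + x ^ 2 ≤ Real.cosh x ^ 2 := by
  have := sq_le_sinh_sq x
  have h := Real.cosh_sq x
  nlinarith

lemma hQ' (x : ℝ) : HasDerivAt Q (-Real.sqrt 2 * Real.sinh x / Real.cosh x ^ 2) x := by
  have h := (hasDerivAt_const x (Real.sqrt 2)).fun_div (Real.hasDerivAt_cosh x) ((Real.cosh_pos x).ne')
  refine h.congr_deriv ?_
  ring

lemma derivQ_eq : deriv Q = fun x => -Real.sqrt 2 * Real.sinh x / Real.cosh x ^ 2 :=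
  funext fun x => (hQ' x).deriv

lemma hQ'' (x : ℝ) :
    HasDerivAt (deriv Q)
      (Real.sqrt 2 * (2 * Real.sinh x ^ 2 - Real.cosh x ^ 2) / Real.cosh x ^ 3) x := by
  rw [derivQ_eq]
  have hc : Real.cosh x ^ 2 ≠ 0 := pow_ne_zero _ ((Real.cosh_pos x).ne')
  have hnum : HasDerivAt (fun y => -Real.sqrt 2 * Real.sinh y)
      (-Real.sqrt 2 * Real.cosh x) x := (Real.hasDerivAt_sinh x).const_mul _
  have hden : HasDerivAt (fun y => Real.cosh y ^ 2)
      (2 * Real.cosh x * Real.sinh x) x := by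
    have := (Real.hasDerivAt_cosh x).fun_pow 2
    simpa [mul_comm, mul_assoc, mul_left_comm] using this
  have h := hnum.fun_div hden hc
  refine h.congr_deriv ?_
  have hc0 : Real.cosh x ≠ 0 := (Real.cosh_pos x).ne'
  field_simp
  ring

lemma Q_cont : Continuous Q :=
  continuous_const.div Real.continuous_cosh (fun x => (Real.cosh_pos x).ne')

lemma Q_sq_le (x : ℝ) : Q x ^ 2 ≤ 2 * (1 + x ^ 2)⁻¹ := by
  have h1 : (0:ℝ) < 1 + x ^ 2 := by positivity
  have h2 : 1 + x ^ 2 ≤ Real.cosh x ^ 2 := one_add_sq_le_cosh_sq x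
  have hs : Real.sqrt 2 ^ 2 = 2 := Real.sq_sqrt (by norm_num)
  have : Q x ^ 2 = 2 / Real.cosh x ^ 2 := by
    simp only [Q, div_pow, hs]
  rw [this, div_eq_mul_inv]
  gcongr

lemma derivQ_sq_le (x : ℝ) : (deriv Q x) ^ 2 ≤ 2 * (1 + x ^ 2)⁻¹ := by
  rw [derivQ_eq]
  have h1 : (0:ℝ) < 1 + x ^ 2 := by positivity
  have h2 : 1 + x ^ 2 ≤ Real.cosh x ^ 2 := one_add_sq_le_cosh_sq x
  have hs : Real.sqrt 2 ^ 2 = 2 := Real.sq_sqrt (by norm_num)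
  have hsinh : Real.sinh x ^ 2 ≤ Real.cosh x ^ 2 := by
    have := Real.cosh_sq x; nlinarith
  have hc : (0:ℝ) < Real.cosh x ^ 2 := by positivity
  have key : (-Real.sqrt 2 * Real.sinh x / Real.cosh x ^ 2) ^ 2
      = 2 * Real.sinh x ^ 2 / (Real.cosh x ^ 2) ^ 2 := by
    rw [div_pow, mul_pow, neg_pow, hs]; ring_nf
  rw [key]
  calc 2 * Real.sinh x ^ 2 / (Real.cosh x ^ 2) ^ 2
      ≤ 2 * Real.cosh x ^ 2 / (Real.cosh x ^ 2) ^ 2 := by gcongr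
    _ = 2 / Real.cosh x ^ 2 := by field_simp
    _ ≤ 2 * (1 + x ^ 2)⁻¹ := by rw [div_eq_mul_inv]; gcongr

lemma int_bound : Integrable (fun x : ℝ => 2 * (1 + x ^ 2)⁻¹) :=
  integrable_inv_one_add_sq.const_mul 2

theorem stmt0 :
    MemLp Q 2 (volume : Measure ℝ) ∧
    MemLp (deriv Q) 2 (volume : Measure ℝ) ∧
    ∀ x : ℝ, deriv (deriv Q) x - Q x + (Q x) ^ 3 = 0 := by
  have hQcont : Continuous Q := Q_cont
  have hQ'cont : Continuous (deriv Q) := by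
    rw [derivQ_eq]
    exact (continuous_const.mul Real.continuous_sinh).div (Real.continuous_cosh.pow 2)
      (fun x => by positivity)
  refine ⟨?_, ?_, ?_⟩
  · rw [memLp_two_iff_integrable_sq hQcont.aestronglyMeasurable]
    refine int_bound.mono (hQcont.pow 2).aestronglyMeasurable
      (Filter.Eventually.of_forall fun x => ?_)
    have := Q_sq_le x
    have h1 : (0:ℝ) < 1 + x ^ 2 := by positivity
    rw [Real.norm_eq_abs, Real.norm_eq_abs, abs_of_nonneg (sq_nonneg _),
        abs_of_nonneg (by positivity : (0:ℝ) ≤ 2 * (1 + x ^ 2)⁻¹)]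
    exact this
  · rw [memLp_two_iff_integrable_sq hQ'cont.aestronglyMeasurable]
    refine int_bound.mono (hQ'cont.pow 2).aestronglyMeasurable
      (Filter.Eventually.of_forall fun x => ?_)
    have := derivQ_sq_le x
    have h1 : (0:ℝ) < 1 + x ^ 2 := by positivity
    rw [Real.norm_eq_abs, Real.norm_eq_abs, abs_of_nonneg (sq_nonneg _),
        abs_of_nonneg (by positivity : (0:ℝ) ≤ 2 * (1 + x ^ 2)⁻¹)]
    exact this
  · intro x
    have h2 : deriv (deriv Q) x
        = Real.sqrt 2 * (2 * Real.sinh x ^ 2 - Real.cosh x ^ 2) / Real.cosh x ^ 3 :=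
      (hQ'' x).deriv
    have hc : Real.cosh x ≠ 0 := (Real.cosh_pos x).ne'
    have hsq : Real.sqrt 2 ^ 2 = 2 := Real.sq_sqrt (by norm_num)
    have hsinh : Real.sinh x ^ 2 = Real.cosh x ^ 2 - 1 := by
      have := Real.cosh_sq x; linarith
    rw [h2]
    simp only [Q]
    have h3 : Real.sqrt 2 ^ 3 = 2 * Real.sqrt 2 := by
      rw [pow_succ, hsq]
    field_simp
    linear_combination (2 * Real.sqrt 2) * hsinh + h3
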